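/- Let Σ = {a_1 < a_2 < … < a_k} and let r_1,…,r_k ≥ 0 be integers with r_1 + … + r_k = n. A permutation π ∈ S_n is the suffix array of a word w ∈ Σⁿ having exactly r_i occurrences of the letter a_i for each i ∈ [1,k] if and only if, setting π' = (n+1) π(1) … π(n) ∈ S_{n+1} (i.e., π'(1) = n+1 and π'(i+1) = π(i)), one has Des(Φ(π')) ⊆ {1, 1+r_1, 1+r_1+r_2, …, 1+r_1+…+r_{k−1}}. Moreover, in this case π is the suffix array of exactly one such word. -/

import Mathlib

/-- Cyclic addition of the constant `k` to all values of a permutation of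
`{1, …, n}` (identifying positions/values with `Fin n`, 1-based position `i`
corresponding to `i - 1 : Fin n`): `(addConst π k) i = π i + k (mod n)`. -/
def addConst {n : ℕ} (π : Equiv.Perm (Fin n)) (k : ℕ) : Equiv.Perm (Fin n) :=
  π.trans (finRotate n ^ k)

/-- The linking permutation `Φ(π) = π⁻¹ ∘ (π + 1)`, i.e.
`Φ(π) i = π⁻¹ (π i + 1)` with cyclic value addition (`n + 1 ≡ 1`). -/
def linkPerm {n : ℕ} (π : Equiv.Perm (Fin n)) : Equiv.Perm (Fin n) :=
  (π.trans (finRotate n)).trans π.symm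

/-- A permutation has exactly one orbit: iterating it reaches any element from
any element. -/
def OneOrbit {n : ℕ} (φ : Equiv.Perm (Fin n)) : Prop :=
  ∀ x y : Fin n, ∃ m : ℕ, (φ ^ m) x = y

/-- The descent set of a permutation of `{1, …, n}`, as a set of 1-based
positions: `i ∈ [1, n-1]` is a descent iff `φ(i) > φ(i+1)`.  The 1-based
position `i` corresponds to the element `i - 1 : Fin n`. -/
def desSet {n : ℕ} (φ : Equiv.Perm (Fin n)) : Set ℕ :=
  {i : ℕ | ∃ h : i < n, 1 ≤ i ∧
    φ ⟨i, h⟩ < φ ⟨i - 1, Nat.lt_of_le_of_lt (Nat.sub_le i 1) h⟩}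

/-- `π` is the suffix array of the word `w` of length `n`: `π i` is the
(0-based) starting position of the `i`-th smallest suffix of `w` in the
lexicographic order on lists (a proper prefix precedes its extensions). -/
def IsSuffixArray {α : Type*} [LinearOrder α] {n : ℕ} (w : List α)
    (π : Equiv.Perm (Fin n)) : Prop :=
  w.length = n ∧ ∀ i j : Fin n, i < j → w.drop (π i : ℕ) < w.drop (π j : ℕ)

/-- `π` is the Burrows–Wheeler array of the word `w` of length `n`: `π i` is
the (0-based) starting position of the `i`-th smallest cyclic shift of `w`. -/
def IsBWArray {α : Type*} [LinearOrder α] {n : ℕ} (w : List α)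
    (π : Equiv.Perm (Fin n)) : Prop :=
  w.length = n ∧ ∀ i j : Fin n, i < j → w.rotate (π i : ℕ) < w.rotate (π j : ℕ)

/-- A word is primitive iff it is not a proper power of another word:
`w = v^k` implies `k = 1`. -/
def Primitive {α : Type*} (w : List α) : Prop :=
  ∀ (v : List α) (k : ℕ), w = (List.replicate k v).flatten → k = 1

/-- From `σ ∈ S_n`, the permutation `π' = (n+1) σ(1) ⋯ σ(n) ∈ S_{n+1}`:
position `1` (element `0 : Fin (n+1)`) is sent to the value `n + 1`
(element `Fin.last n`), and position `i + 1` is sent to the value `σ(i)`. -/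
def appendMax {n : ℕ} (σ : Equiv.Perm (Fin n)) : Equiv.Perm (Fin (n + 1)) :=
  ((finSuccEquiv n).trans σ.optionCongr).trans (finSuccEquiv' (Fin.last n)).symm

/-- Binomial coefficient with integer arguments, which is `0` when the lower
index is negative or exceeds the upper index. -/
def intChoose (m r : ℤ) : ℕ :=
  if 0 ≤ r ∧ r ≤ m then m.toNat.choose r.toNat else 0

/-- `π ∈ S_{n+1}` is ascending-to-max.  Values are 1-based: the value
`i ∈ [1, n-1]` corresponds to `x.castSucc` where `x : Fin n` satisfies
`(x : ℕ) + 1 = i` … i.e. `x = i - 1`; the value `i + 1` corresponds to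
`x.succ`, and the value `n + 1` corresponds to `Fin.last n`. -/
def AscendingToMax {n : ℕ} (π : Equiv.Perm (Fin (n + 1))) : Prop :=
  ∀ x : Fin n, (x : ℕ) + 1 < n →
    (π.symm x.castSucc < π.symm (Fin.last n) →
      π.symm x.succ < π.symm (Fin.last n) →
      π.symm x.castSucc < π.symm x.succ) ∧
    (π.symm (Fin.last n) < π.symm x.castSucc →
      π.symm (Fin.last n) < π.symm x.succ →
      π.symm x.succ < π.symm x.castSucc)

/-- `π ∈ S_{n+1}` is non-nesting.  Values are 1-based: the values `i, j ∈ [1, n]`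
correspond to `x.castSucc, y.castSucc` with `x, y : Fin n`, and the values
`i + 1, j + 1` to `x.succ, y.succ`. -/
def NonNesting {n : ℕ} (π : Equiv.Perm (Fin (n + 1))) : Prop :=
  ∀ x y : Fin n, π.symm x.castSucc < π.symm y.castSucc →
    ((π.symm x.castSucc < π.symm x.succ ∧ π.symm y.castSucc < π.symm y.succ) ∨
      (π.symm x.succ < π.symm x.castSucc ∧ π.symm y.succ < π.symm y.castSucc)) →
    π.symm x.succ < π.symm y.succ

section SA9
open Finset

variable {n k : ℕ}

private def SA9R (r : Fin k → ℕ) (m : ℕ) : ℕ :=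
  ∑ i : Fin k, if (i : ℕ) < m then r i else 0

private lemma SA9R_zero (r : Fin k → ℕ) : SA9R r 0 = 0 := by simp [SA9R]

private lemma SA9R_mono (r : Fin k → ℕ) : Monotone (SA9R r) := by
  intro a b hab
  refine Finset.sum_le_sum fun i _ => ?_
  split_ifs <;> omega

private lemma SA9R_top (r : Fin k → ℕ) {m : ℕ} (hm : k ≤ m) : SA9R r m = ∑ i, r i :=
  Finset.sum_congr rfl fun i _ => if_pos (lt_of_lt_of_le i.isLt hm)

private lemma SA9R_le (r : Fin k → ℕ) (m : ℕ) : SA9R r m ≤ ∑ i, r i := by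
  refine Finset.sum_le_sum fun i _ => ?_
  split_ifs <;> omega

private lemma SA9R_succ (r : Fin k → ℕ) {t : ℕ} (ht : t < k) :
    SA9R r (t + 1) = SA9R r t + r ⟨t, ht⟩ := by
  have key : ∀ i : Fin k, (if (i : ℕ) < t + 1 then r i else 0)
      = (if (i : ℕ) < t then r i else 0) + (if i = ⟨t, ht⟩ then r i else 0) := by
    intro i
    by_cases h1 : (i : ℕ) = t
    · have h2 : i = ⟨t, ht⟩ := Fin.ext h1
      rw [if_pos (by omega), if_neg (by omega), if_pos h2]
      omega
    · have h2 : i ≠ ⟨t, ht⟩ := fun he => h1 (by rw [he])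
      rw [if_neg h2]
      by_cases h3 : (i : ℕ) < t
      · rw [if_pos (by omega), if_pos h3]
        omega
      · rw [if_neg (by omega), if_neg h3]
  calc SA9R r (t + 1)
      = ∑ i : Fin k, ((if (i : ℕ) < t then r i else 0) + (if i = ⟨t, ht⟩ then r i else 0)) :=
        Finset.sum_congr rfl fun i _ => key i
    _ = SA9R r t + r ⟨t, ht⟩ := by
        rw [Finset.sum_add_distrib]
        congr 1
        simp [Finset.sum_ite_eq']

private lemma SA9k_pos (r : Fin k → ℕ) (hr : ∑ i, r i = n) (i : Fin n) : 0 < k := by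
  by_contra h
  have hk0 : k = 0 := by omega
  subst hk0
  have h0 : (0 : ℕ) = n := by simpa using hr
  have := i.isLt
  omega

private lemma SA9g_ex (r : Fin k → ℕ) (hr : ∑ i, r i = n) (i : Fin n) :
    ∃ t, (i : ℕ) < SA9R r (t + 1) :=
  ⟨k - 1, by rw [SA9R_top r (by omega), hr]; exact i.isLt⟩

private def SA9g (r : Fin k → ℕ) (hr : ∑ i, r i = n) (i : Fin n) : Fin k :=
  ⟨Nat.find (SA9g_ex r hr i), by
    have h1 : Nat.find (SA9g_ex r hr i) ≤ k - 1 :=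
      Nat.find_le (by rw [SA9R_top r (by omega), hr]; exact i.isLt)
    have h2 := SA9k_pos r hr i
    omega⟩

private lemma SA9g_le_iff (r : Fin k → ℕ) (hr : ∑ i, r i = n) (i : Fin n) (t : ℕ) :
    (SA9g r hr i : ℕ) ≤ t ↔ (i : ℕ) < SA9R r (t + 1) := by
  constructor
  · intro h
    have h' : Nat.find (SA9g_ex r hr i) ≤ t := h
    exact lt_of_lt_of_le (Nat.find_spec (SA9g_ex r hr i)) (SA9R_mono r (by omega))
  · intro h
    exact Nat.find_le h

private lemma SA9g_mono (r : Fin k → ℕ) (hr : ∑ i, r i = n) : Monotone (SA9g r hr) := by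
  intro i j hij
  rw [Fin.le_def, SA9g_le_iff]
  calc (i : ℕ) ≤ (j : ℕ) := hij
    _ < _ := (SA9g_le_iff r hr j _).mp le_rfl

private lemma SA9card_lt {m : ℕ} (hm : m ≤ n) :
    (univ.filter fun i : Fin n => (i : ℕ) < m).card = m := by
  have he : (univ.filter fun i : Fin n => (i : ℕ) < m) = image (Fin.castLE hm) univ := by
    ext i
    simp only [mem_filter, mem_univ, true_and, mem_image]
    constructor
    · intro h
      exact ⟨⟨(i : ℕ), h⟩, Fin.ext rfl⟩
    · rintro ⟨j, rfl⟩
      exact j.isLt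
  rw [he, Finset.card_image_of_injective _ (Fin.castLE_injective hm), card_univ,
    Fintype.card_fin]

private lemma SA9card_le_t (h : Fin n → Fin k) (r : Fin k → ℕ)
    (hcnt : ∀ a, (univ.filter fun i => h i = a).card = r a) (t : ℕ) :
    (univ.filter fun i : Fin n => (h i : ℕ) ≤ t).card = SA9R r (t + 1) := by
  rw [Finset.card_eq_sum_card_fiberwise (f := h) (t := univ) (fun x _ => mem_univ _), SA9R]
  refine Finset.sum_congr rfl fun a _ => ?_
  rw [Finset.filter_filter]
  by_cases hat : (a : ℕ) < t + 1
  · rw [if_pos hat, ← hcnt a]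
    congr 1
    ext i
    simp only [mem_filter, mem_univ, true_and]
    constructor
    · exact fun hh => hh.2
    · intro hh
      exact ⟨by rw [hh]; omega, hh⟩
  · rw [if_neg hat, Finset.card_eq_zero]
    ext i
    simp only [mem_filter, mem_univ, true_and, Finset.notMem_empty, iff_false, not_and]
    intro h1 h2
    rw [h2] at h1
    omega

private lemma SA9mono_le_iff (h : Fin n → Fin k) (r : Fin k → ℕ) (hm : Monotone h)
    (hcnt : ∀ a, (univ.filter fun i => h i = a).card = r a) (i : Fin n) (t : ℕ) :
    (h i : ℕ) ≤ t ↔ (i : ℕ) < SA9R r (t + 1) := by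
  rw [← SA9card_le_t h r hcnt t]
  constructor
  · intro hle
    have hsub : Finset.Iic i ⊆ univ.filter fun j => (h j : ℕ) ≤ t := by
      intro j hj
      simp only [Finset.mem_Iic] at hj
      simp only [mem_filter, mem_univ, true_and]
      exact le_trans (Fin.le_def.mp (hm hj)) hle
    have hc := Finset.card_le_card hsub
    rw [Fin.card_Iic] at hc
    omega
  · intro hlt
    by_contra hnot
    have hsub : (univ.filter fun j : Fin n => (h j : ℕ) ≤ t) ⊆ Finset.Iio i := by
      intro j hj
      simp only [mem_filter, mem_univ, true_and] at hj
      simp only [Finset.mem_Iio]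
      by_contra hji
      have h1 : i ≤ j := le_of_not_gt hji
      have h2 := Fin.le_def.mp (hm h1)
      omega
    have hc := Finset.card_le_card hsub
    rw [Fin.card_Iio] at hc
    omega

private lemma SA9mono_eq_g (h : Fin n → Fin k) (r : Fin k → ℕ) (hr : ∑ i, r i = n)
    (hm : Monotone h) (hcnt : ∀ a, (univ.filter fun i => h i = a).card = r a) (i : Fin n) :
    h i = SA9g r hr i := by
  have h1 : (h i : ℕ) ≤ (SA9g r hr i : ℕ) := by
    rw [SA9mono_le_iff h r hm hcnt]
    exact (SA9g_le_iff r hr i _).mp le_rfl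
  have h2 : (SA9g r hr i : ℕ) ≤ (h i : ℕ) := by
    rw [SA9g_le_iff]
    exact (SA9mono_le_iff h r hm hcnt i _).mp le_rfl
  exact Fin.ext (le_antisymm h1 h2)

private lemma SA9card_g (r : Fin k → ℕ) (hr : ∑ i, r i = n) (a : Fin k) :
    (univ.filter fun i : Fin n => SA9g r hr i = a).card = r a := by
  have hB : SA9R r ((a : ℕ) + 1) ≤ n := by
    have := SA9R_le r ((a : ℕ) + 1)
    omega
  have hA : SA9R r (a : ℕ) ≤ SA9R r ((a : ℕ) + 1) := SA9R_mono r (by omega)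
  have hfe : (univ.filter fun i : Fin n => SA9g r hr i = a)
      = (univ.filter fun i : Fin n => (i : ℕ) < SA9R r ((a : ℕ) + 1)) \
        (univ.filter fun i : Fin n => (i : ℕ) < SA9R r (a : ℕ)) := by
    ext i
    simp only [mem_filter, mem_univ, true_and, mem_sdiff, not_lt]
    constructor
    · intro hg
      refine ⟨(SA9g_le_iff r hr i (a : ℕ)).mp (by rw [hg]), ?_⟩
      by_contra hc
      push_neg at hc
      by_cases ha0 : (a : ℕ) = 0
      · rw [ha0, SA9R_zero] at hc
        omega
      · have hle : (SA9g r hr i : ℕ) ≤ (a : ℕ) - 1 := (SA9g_le_iff r hr i _).mpr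
          (by rw [Nat.sub_add_cancel (by omega)]; exact hc)
        rw [hg] at hle
        omega
    · rintro ⟨h1, h2⟩
      have hle : (SA9g r hr i : ℕ) ≤ (a : ℕ) := (SA9g_le_iff r hr i _).mpr h1
      have hge : (a : ℕ) ≤ (SA9g r hr i : ℕ) := by
        by_contra hc
        push_neg at hc
        have hx : (i : ℕ) < SA9R r ((SA9g r hr i : ℕ) + 1) := (SA9g_le_iff r hr i _).mp le_rfl
        have hy := lt_of_lt_of_le hx (SA9R_mono r (show (SA9g r hr i : ℕ) + 1 ≤ (a : ℕ) by omega))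
        omega
      exact Fin.ext (le_antisymm hle hge)
  rw [hfe, Finset.card_sdiff_of_subset (by
      intro i hi
      simp only [mem_filter, mem_univ, true_and] at *
      omega),
    SA9card_lt hB, SA9card_lt (le_trans hA hB)]
  have hs := SA9R_succ r a.isLt
  rw [show (⟨(a : ℕ), a.isLt⟩ : Fin k) = a from Fin.eta a a.isLt] at hs
  omega

private lemma SA9am_zero (π : Equiv.Perm (Fin n)) : appendMax π 0 = Fin.last n := by
  simp [appendMax]

private lemma SA9am_succ (π : Equiv.Perm (Fin n)) (i : Fin n) :
    appendMax π i.succ = (π i).castSucc := by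
  simp [appendMax]

private lemma SA9am_ne (π : Equiv.Perm (Fin n)) {y : Fin (n + 1)} (hy : y ≠ 0) :
    appendMax π y = (π (y.pred hy)).castSucc := by
  conv_lhs => rw [← Fin.succ_pred y hy]
  exact SA9am_succ π _

private lemma SA9pos_lt (π : Equiv.Perm (Fin n)) {y : Fin (n + 1)} (hy : y ≠ 0) :
    (appendMax π y : ℕ) < n := by
  rw [SA9am_ne π hy, Fin.coe_castSucc]
  exact (π _).isLt

private lemma SA9phi_pos (π : Equiv.Perm (Fin n)) {y : Fin (n + 1)} (hy : y ≠ 0) :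
    (appendMax π (linkPerm (appendMax π) y) : ℕ) = (appendMax π y : ℕ) + 1 := by
  have h1 : appendMax π (linkPerm (appendMax π) y) = appendMax π y + 1 := by
    simp [linkPerm, Equiv.trans_apply, finRotate_succ_apply]
  rw [h1, SA9am_ne π hy]
  exact Fin.val_add_one_of_lt (Fin.castSucc_lt_last _)

private lemma SA9lt_iff {α : Type*} [LinearOrder α] (l m : List α) :
    l < m ↔ List.Lex (· < ·) l m := Iff.rfl

private lemma SA9head_le {α : Type*} [LinearOrder α] {a b : α} {l m : List α}
    (h : a :: l < b :: m) : a ≤ b := by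
  rw [SA9lt_iff] at h
  cases h with
  | rel h => exact le_of_lt h
  | cons h => exact le_rfl

private lemma SA9cons_lt {α : Type*} [LinearOrder α] {a : α} {l m : List α} :
    a :: l < a :: m ↔ l < m := by
  rw [SA9lt_iff, SA9lt_iff]
  exact List.lex_cons_iff

private lemma SA9count (w : List (Fin k)) (a : Fin k) :
    w.count a = (univ.filter fun i : Fin w.length => w[(i : ℕ)] = a).card := by
  induction w with
  | nil => simp
  | cons b t ih =>
    rw [List.count_cons, ih,
      show ((univ.filter fun i : Fin (b :: t).length => (b :: t)[(i : ℕ)] = a).card)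
        = ∑ i : Fin (t.length + 1), if (b :: t)[(i : ℕ)] = a then 1 else 0 from
        Finset.card_filter _ _,
      Fin.sum_univ_succ]
    simp only [List.getElem_cons_zero, Fin.val_succ, List.getElem_cons_succ, Fin.val_zero,
      beq_iff_eq]
    rw [← Finset.card_filter]
    by_cases hba : b = a
    · rw [if_pos hba]
      simp [hba, Nat.add_comm]
    · rw [if_neg hba]
      simp [hba, Nat.add_comm]

private lemma SA9heads (r : Fin k → ℕ) (hr : ∑ i, r i = n) (π : Equiv.Perm (Fin n))
    (w : List (Fin k)) (hw : w.length = n) (hcount : ∀ a, w.count a = r a)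
    (hsa : IsSuffixArray w π) (j : Fin n) :
    w[(π j : ℕ)]'(by rw [hw]; exact (π j).isLt) = SA9g r hr j := by
  set h : Fin n → Fin k := fun q => w[(π q : ℕ)]'(by rw [hw]; exact (π q).isLt) with hh
  have hd : ∀ q : Fin n, w.drop (π q : ℕ) = h q :: w.drop ((π q : ℕ) + 1) :=
    fun q => List.drop_eq_getElem_cons _
  have hmono : Monotone h := by
    intro i j hij
    rcases eq_or_lt_of_le hij with he | hlt
    · rw [he]
    · have hl := hsa.2 i j hlt
      rw [hd i, hd j] at hl
      exact SA9head_le hl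
  have hcnt : ∀ a, (Finset.univ.filter fun i => h i = a).card = r a := by
    intro a
    rw [← hcount a, SA9count w a, ← Fintype.card_subtype, ← Fintype.card_subtype]
    exact Fintype.card_congr ((π.trans (finCongr hw.symm)).subtypeEquiv fun i => Iff.rfl)
  exact SA9mono_eq_g h r hr hmono hcnt j

private lemma SA9Dlt (π : Equiv.Perm (Fin n)) (w : List (Fin k)) (hw : w.length = n)
    (hsa : IsSuffixArray w π) {x y : Fin (n + 1)} (hxy : x < y) :
    w.drop (appendMax π x : ℕ) < w.drop (appendMax π y : ℕ) := by
  by_cases hx : x = 0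
  · subst hx
    have hy : y ≠ 0 := Fin.pos_iff_ne_zero.mp hxy
    rw [SA9am_zero, Fin.val_last,
      show w.drop n = [] from by rw [← hw]; exact List.drop_length,
      List.drop_eq_getElem_cons (show (appendMax π y : ℕ) < w.length from by
        rw [hw]; exact SA9pos_lt π hy)]
    exact List.nil_lt_cons _ _
  · have hy : y ≠ 0 := by
      intro h
      subst h
      exact absurd (Fin.lt_def.mp hxy) (by simp)
    rw [SA9am_ne π hx, SA9am_ne π hy, Fin.coe_castSucc, Fin.coe_castSucc]
    exact hsa.2 _ _ ((Fin.pred_lt_pred_iff).mpr hxy)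

private lemma SA9same (π : Equiv.Perm (Fin n)) (w : List (Fin k)) (hw : w.length = n)
    (hsa : IsSuffixArray w π) {x y : Fin (n + 1)} (hx : x ≠ 0) (hy : y ≠ 0) (hxy : x < y)
    (hhead : w[(π (x.pred hx) : ℕ)]'(by rw [hw]; exact (π _).isLt)
      = w[(π (y.pred hy) : ℕ)]'(by rw [hw]; exact (π _).isLt)) :
    linkPerm (appendMax π) x < linkPerm (appendMax π) y := by
  have h1 := SA9Dlt π w hw hsa hxy
  rw [SA9am_ne π hx, SA9am_ne π hy, Fin.coe_castSucc, Fin.coe_castSucc,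
    List.drop_eq_getElem_cons (show ((π (x.pred hx) : ℕ)) < w.length from by
      rw [hw]; exact (π _).isLt),
    List.drop_eq_getElem_cons (show ((π (y.pred hy) : ℕ)) < w.length from by
      rw [hw]; exact (π _).isLt), hhead, SA9cons_lt] at h1
  have e1 : (appendMax π (linkPerm (appendMax π) x) : ℕ) = (π (x.pred hx) : ℕ) + 1 := by
    rw [SA9phi_pos π hx, SA9am_ne π hx, Fin.coe_castSucc]
  have e2 : (appendMax π (linkPerm (appendMax π) y) : ℕ) = (π (y.pred hy) : ℕ) + 1 := by
    rw [SA9phi_pos π hy, SA9am_ne π hy, Fin.coe_castSucc]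
  rcases lt_trichotomy (linkPerm (appendMax π) x) (linkPerm (appendMax π) y) with h' | h' | h'
  · exact h'
  · exact absurd ((linkPerm (appendMax π)).injective h') (ne_of_lt hxy)
  · exfalso
    have h2 := SA9Dlt π w hw hsa h'
    rw [e1, e2] at h2
    exact absurd h1 (lt_asymm h2)

private lemma SA9forward (r : Fin k → ℕ) (hr : ∑ i, r i = n) (π : Equiv.Perm (Fin n))
    (w : List (Fin k)) (hw : w.length = n) (hcount : ∀ a, w.count a = r a)
    (hsa : IsSuffixArray w π) :
    desSet (linkPerm (appendMax π)) ⊆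
      {s : ℕ | ∃ m : ℕ, m ≤ k - 1 ∧
        s = 1 + ∑ i : Fin k, if (i : ℕ) < m then r i else 0} := by
  intro s hs
  obtain ⟨hs1, hs2, hlt⟩ := hs
  simp only [Set.mem_setOf_eq]
  by_cases hs0 : s = 1
  · exact ⟨0, Nat.zero_le _, by simp [hs0]⟩
  · have hs2' : 2 ≤ s := by omega
    set x : Fin (n + 1) := ⟨s - 1, by omega⟩ with hxdef
    set y : Fin (n + 1) := ⟨s, hs1⟩ with hydef
    have hx : x ≠ 0 := by
      intro h
      rw [Fin.ext_iff] at h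
      simp [hxdef] at h
      omega
    have hy : y ≠ 0 := by
      intro h
      rw [Fin.ext_iff] at h
      simp [hydef] at h
      omega
    have hxy : x < y := by
      rw [Fin.lt_def]
      simp [hxdef, hydef]
      omega
    have hlt' : linkPerm (appendMax π) y < linkPerm (appendMax π) x := hlt
    have hne : w[(π (x.pred hx) : ℕ)]'(by rw [hw]; exact (π _).isLt)
        ≠ w[(π (y.pred hy) : ℕ)]'(by rw [hw]; exact (π _).isLt) := by
      intro he
      exact absurd (SA9same π w hw hsa hx hy hxy he) (lt_asymm hlt')
    have hg1 := SA9heads r hr π w hw hcount hsa (x.pred hx)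
    have hg2 := SA9heads r hr π w hw hcount hsa (y.pred hy)
    have hpx : ((x.pred hx : Fin n) : ℕ) = s - 2 := by
      rw [Fin.coe_pred]
      show s - 1 - 1 = s - 2
      omega
    have hpy : ((y.pred hy : Fin n) : ℕ) = s - 1 := by
      rw [Fin.coe_pred]
    have hplt : x.pred hx < y.pred hy := by
      rw [Fin.lt_def, hpx, hpy]
      omega
    have hgm : SA9g r hr (x.pred hx) < SA9g r hr (y.pred hy) := by
      rcases lt_or_eq_of_le (SA9g_mono r hr (le_of_lt hplt)) with h' | h'
      · exact h'
      · rw [hg1, hg2, h'] at hne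
        exact absurd rfl hne
    set c : Fin k := SA9g r hr (y.pred hy) with hcdef
    have hc1 : 1 ≤ (c : ℕ) := by
      have := Fin.lt_def.mp hgm
      omega
    have key1 : (s : ℕ) - 2 < SA9R r (c : ℕ) := by
      have h1 : (SA9g r hr (x.pred hx) : ℕ) ≤ (c : ℕ) - 1 := by
        have := Fin.lt_def.mp hgm
        omega
      have h2 := (SA9g_le_iff r hr (x.pred hx) ((c : ℕ) - 1)).mp h1
      rw [Nat.sub_add_cancel hc1] at h2
      rw [← hpx]
      exact h2
    have key2 : SA9R r (c : ℕ) ≤ s - 1 := by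
      by_contra hcon
      push_neg at hcon
      have h1 : ((y.pred hy : Fin n) : ℕ) < SA9R r (((c : ℕ) - 1) + 1) := by
        rw [Nat.sub_add_cancel hc1, hpy]
        exact hcon
      have h2 := (SA9g_le_iff r hr (y.pred hy) ((c : ℕ) - 1)).mpr h1
      rw [← hcdef] at h2
      omega
    refine ⟨(c : ℕ), by have := c.isLt; omega, ?_⟩
    show s = 1 + SA9R r (c : ℕ)
    omega

private lemma SA9count_ofFn {m : ℕ} (f : Fin m → Fin k) (a : Fin k) :
    (List.ofFn f).count a = (univ.filter fun i => f i = a).card := by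
  induction m with
  | zero => simp
  | succ m ih =>
    rw [List.ofFn_succ, List.count_cons, ih fun i => f i.succ,
      show ((univ.filter fun i : Fin (m + 1) => f i = a).card)
        = ∑ i : Fin (m + 1), if f i = a then 1 else 0 from Finset.card_filter _ _,
      Fin.sum_univ_succ, ← Finset.card_filter]
    simp only [beq_iff_eq]
    by_cases hba : f 0 = a
    · rw [if_pos hba]
      simp [hba, Nat.add_comm]
    · rw [if_neg hba]
      simp [hba, Nat.add_comm]

set_option maxHeartbeats 2000000 in
private lemma SA9sa (r : Fin k → ℕ) (hr : ∑ i, r i = n) (π : Equiv.Perm (Fin n))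
    (w : List (Fin k)) (hw : w.length = n)
    (hhead : ∀ q : Fin n, w[(π q : ℕ)]'(by rw [hw]; exact (π q).isLt) = SA9g r hr q)
    (hdes : desSet (linkPerm (appendMax π)) ⊆
      {s : ℕ | ∃ m : ℕ, m ≤ k - 1 ∧
        s = 1 + ∑ i : Fin k, if (i : ℕ) < m then r i else 0}) :
    IsSuffixArray w π := by
  have hstep : ∀ (j : ℕ) (hj : j < n + 1) (hj2 : 2 ≤ j),
      SA9g r hr ⟨j - 2, by omega⟩ = SA9g r hr ⟨j - 1, by omega⟩ →
      linkPerm (appendMax π) ⟨j - 1, by omega⟩ < linkPerm (appendMax π) ⟨j, hj⟩ := by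
    intro j hj hj2 hgeq
    have hnotB : j ∉ {s : ℕ | ∃ m : ℕ, m ≤ k - 1 ∧
        s = 1 + ∑ i : Fin k, if (i : ℕ) < m then r i else 0} := by
      intro hmem
      simp only [Set.mem_setOf_eq] at hmem
      obtain ⟨m, hm, hs⟩ := hmem
      have hs' : j = 1 + SA9R r m := hs
      have hm1 : 1 ≤ m := by
        by_contra hcon
        have hm0 : m = 0 := by omega
        rw [hm0, SA9R_zero] at hs'
        omega
      have hle : (SA9g r hr ⟨j - 2, by omega⟩ : ℕ) ≤ m - 1 := by
        refine (SA9g_le_iff r hr _ _).mpr ?_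
        rw [Nat.sub_add_cancel hm1]
        show j - 2 < SA9R r m
        omega
      have hnle : ¬((SA9g r hr ⟨j - 1, by omega⟩ : ℕ) ≤ m - 1) := by
        intro hcon
        have h2 := (SA9g_le_iff r hr _ _).mp hcon
        rw [Nat.sub_add_cancel hm1] at h2
        have h3 : j - 1 < SA9R r m := h2
        omega
      rw [hgeq] at hle
      exact hnle hle
    have hnotDes : j ∉ desSet (linkPerm (appendMax π)) := fun hmem => hnotB (hdes hmem)
    have hne : linkPerm (appendMax π) ⟨j - 1, by omega⟩ ≠ linkPerm (appendMax π) ⟨j, hj⟩ := by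
      intro he
      have h1 := (linkPerm (appendMax π)).injective he
      rw [Fin.mk.injEq] at h1
      omega
    have hnlt : ¬(linkPerm (appendMax π) ⟨j, hj⟩ < linkPerm (appendMax π) ⟨j - 1, by omega⟩) :=
      fun hcon => hnotDes ⟨hj, by omega, hcon⟩
    exact lt_of_le_of_ne (le_of_not_gt hnlt) hne
  have hstep' : ∀ (x z : Fin (n + 1)) (hx : x ≠ 0) (hz : z ≠ 0), (z : ℕ) = (x : ℕ) + 1 →
      SA9g r hr (x.pred hx) = SA9g r hr (z.pred hz) →
      linkPerm (appendMax π) x < linkPerm (appendMax π) z := by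
    intro x z hx hz hzx hgeq
    have hx1 : 1 ≤ (x : ℕ) := by
      rcases Nat.eq_zero_or_pos (x : ℕ) with h0 | h0
      · exact absurd (Fin.ext (by rw [h0, Fin.val_zero])) hx
      · exact h0
    have e1 : x.pred hx = (⟨(z : ℕ) - 2, by have := z.isLt; omega⟩ : Fin n) := by
      apply Fin.ext
      rw [Fin.coe_pred]
      show (x : ℕ) - 1 = (z : ℕ) - 2
      omega
    have e2 : z.pred hz = (⟨(z : ℕ) - 1, by have := z.isLt; omega⟩ : Fin n) := by
      apply Fin.ext
      rw [Fin.coe_pred]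
    rw [e1, e2] at hgeq
    have h := hstep (z : ℕ) z.isLt (by omega) hgeq
    have e3 : (⟨(z : ℕ) - 1, by have := z.isLt; omega⟩ : Fin (n + 1)) = x := by
      apply Fin.ext
      show (z : ℕ) - 1 = (x : ℕ)
      omega
    have e4 : (⟨(z : ℕ), z.isLt⟩ : Fin (n + 1)) = z := Fin.eta z z.isLt
    rw [e3, e4] at h
    exact h
  have hchain : ∀ (d : ℕ) (x y : Fin (n + 1)) (hx : x ≠ 0) (hy : y ≠ 0), x < y →
      (y : ℕ) - (x : ℕ) ≤ d → SA9g r hr (x.pred hx) = SA9g r hr (y.pred hy) →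
      linkPerm (appendMax π) x < linkPerm (appendMax π) y := by
    intro d
    induction d with
    | zero =>
      intro x y hx hy hxy hle _
      exact absurd (Fin.lt_def.mp hxy) (by omega)
    | succ d ih =>
      intro x y hx hy hxy hle hgeq
      by_cases hyx : (y : ℕ) = (x : ℕ) + 1
      · exact hstep' x y hx hy hyx hgeq
      · have hxy' := Fin.lt_def.mp hxy
        have hzlt : (x : ℕ) + 1 < n + 1 := by have := y.isLt; omega
        have hz : (⟨(x : ℕ) + 1, hzlt⟩ : Fin (n + 1)) ≠ 0 := by
          intro h
          have hv := congrArg Fin.val h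
          rw [Fin.val_zero] at hv
          have hv' : (x : ℕ) + 1 = 0 := hv
          omega
        have hxz : x < (⟨(x : ℕ) + 1, hzlt⟩ : Fin (n + 1)) := by
          rw [Fin.lt_def]
          show (x : ℕ) < (x : ℕ) + 1
          omega
        have hzy : (⟨(x : ℕ) + 1, hzlt⟩ : Fin (n + 1)) < y := by
          rw [Fin.lt_def]
          show (x : ℕ) + 1 < (y : ℕ)
          omega
        have hm1 : SA9g r hr (x.pred hx) ≤ SA9g r hr (Fin.pred ⟨(x : ℕ) + 1, hzlt⟩ hz) :=
          SA9g_mono r hr (le_of_lt (Fin.pred_lt_pred_iff.mpr hxz))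
        have hm2 : SA9g r hr (Fin.pred ⟨(x : ℕ) + 1, hzlt⟩ hz) ≤ SA9g r hr (y.pred hy) :=
          SA9g_mono r hr (le_of_lt (Fin.pred_lt_pred_iff.mpr hzy))
        have h1 : SA9g r hr (x.pred hx) = SA9g r hr (Fin.pred ⟨(x : ℕ) + 1, hzlt⟩ hz) :=
          le_antisymm hm1 (by rw [hgeq]; exact hm2)
        have h2 : SA9g r hr (Fin.pred ⟨(x : ℕ) + 1, hzlt⟩ hz) = SA9g r hr (y.pred hy) :=
          le_antisymm hm2 (by rw [← hgeq]; exact hm1)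
        exact lt_trans (hstep' x ⟨(x : ℕ) + 1, hzlt⟩ hx hz rfl h1)
          (ih ⟨(x : ℕ) + 1, hzlt⟩ y hz hy hzy (by
            have hzv : ((⟨(x : ℕ) + 1, hzlt⟩ : Fin (n + 1)) : ℕ) = (x : ℕ) + 1 := rfl
            omega) h2)
  have hbase : ∀ y : Fin (n + 1), y ≠ 0 →
      w.drop (appendMax π 0 : ℕ) < w.drop (appendMax π y : ℕ) := by
    intro y hy
    rw [SA9am_zero, Fin.val_last,
      show w.drop n = [] from by rw [← hw]; exact List.drop_length,
      List.drop_eq_getElem_cons (show (appendMax π y : ℕ) < w.length from by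
        rw [hw]; exact SA9pos_lt π hy)]
    exact List.nil_lt_cons _ _
  have hmain : ∀ (l : ℕ) (x y : Fin (n + 1)), n - (appendMax π x : ℕ) ≤ l → x < y →
      w.drop (appendMax π x : ℕ) < w.drop (appendMax π y : ℕ) := by
    intro l
    induction l with
    | zero =>
      intro x y hl hxy
      have hx0 : x = 0 := by
        by_contra hx
        have := SA9pos_lt π hx
        omega
      subst hx0
      exact hbase y (Fin.pos_iff_ne_zero.mp hxy)
    | succ l ih =>
      intro x y hl hxy
      by_cases hx : x = 0
      · subst hx
        exact hbase y (Fin.pos_iff_ne_zero.mp hxy)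
      · have hy : y ≠ 0 := by
          intro h
          subst h
          exact absurd (Fin.lt_def.mp hxy) (by simp)
        rw [SA9am_ne π hx, SA9am_ne π hy, Fin.coe_castSucc, Fin.coe_castSucc,
          List.drop_eq_getElem_cons (show ((π (x.pred hx) : ℕ)) < w.length from by
            rw [hw]; exact (π _).isLt),
          List.drop_eq_getElem_cons (show ((π (y.pred hy) : ℕ)) < w.length from by
            rw [hw]; exact (π _).isLt), hhead (x.pred hx), hhead (y.pred hy)]
        rcases lt_or_eq_of_le (SA9g_mono r hr
            (le_of_lt (Fin.pred_lt_pred_iff.mpr hxy))) with hlt | heq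
        · exact (SA9lt_iff _ _).mpr (List.Lex.rel hlt)
        · rw [heq, SA9cons_lt]
          have hphixy : linkPerm (appendMax π) x < linkPerm (appendMax π) y :=
            hchain (n + 1) x y hx hy hxy (by omega) heq
          have e1 := SA9phi_pos π hx
          have e2 := SA9phi_pos π hy
          have hrec := ih (linkPerm (appendMax π) x) (linkPerm (appendMax π) y)
            (by
              rw [e1]
              have := SA9pos_lt π hx
              omega) hphixy
          rw [e1, e2, SA9am_ne π hx, SA9am_ne π hy, Fin.coe_castSucc, Fin.coe_castSucc] at hrec
          exact hrec
  refine ⟨hw, fun i j hij => ?_⟩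
  have h := hmain n i.succ j.succ (Nat.sub_le _ _)
    (by rw [Fin.lt_def, Fin.val_succ, Fin.val_succ]
        exact Nat.add_lt_add_right (Fin.lt_def.mp hij) 1)
  rw [SA9am_succ π i, SA9am_succ π j, Fin.coe_castSucc, Fin.coe_castSucc] at h
  exact h

set_option maxHeartbeats 800000 in
private lemma SA9backward (r : Fin k → ℕ) (hr : ∑ i, r i = n) (π : Equiv.Perm (Fin n))
    (hdes : desSet (linkPerm (appendMax π)) ⊆
      {s : ℕ | ∃ m : ℕ, m ≤ k - 1 ∧
        s = 1 + ∑ i : Fin k, if (i : ℕ) < m then r i else 0}) :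
    ∃ w : List (Fin k), w.length = n ∧ (∀ a : Fin k, w.count a = r a) ∧
      IsSuffixArray w π := by
  refine ⟨List.ofFn (fun p : Fin n => SA9g r hr (π.symm p)), List.length_ofFn, ?_, ?_⟩
  · intro a
    rw [SA9count_ofFn, ← SA9card_g r hr a, ← Fintype.card_subtype, ← Fintype.card_subtype]
    exact Fintype.card_congr (Equiv.subtypeEquiv π.symm fun p => Iff.rfl)
  · refine SA9sa r hr π _ (List.length_ofFn) (fun q => ?_) hdes
    simp

end SA9

/-- Over `Σ = {a_1 < … < a_k}` (modelled as `Fin k`) with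
`r_1 + … + r_k = n`: a permutation `π ∈ S_n` is the suffix array of a word
`w ∈ Σⁿ` with `r_i` occurrences of `a_i` iff, for
`π' = (n+1) π(1) … π(n)`, one has
`Des(Φ(π')) ⊆ {1, 1 + r_1, …, 1 + r_1 + ⋯ + r_{k-1}}`; and `π` is the suffix
array of exactly one such word. -/
theorem isSuffixArray_iff_desSet_subset {n k : ℕ} (r : Fin k → ℕ)
    (hr : ∑ i, r i = n) (π : Equiv.Perm (Fin n)) :
    ((∃ w : List (Fin k), w.length = n ∧ (∀ a : Fin k, w.count a = r a) ∧
        IsSuffixArray w π) ↔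
      desSet (linkPerm (appendMax π)) ⊆
        {s : ℕ | ∃ m : ℕ, m ≤ k - 1 ∧
          s = 1 + ∑ i : Fin k, if (i : ℕ) < m then r i else 0}) ∧
    (∀ w₁ w₂ : List (Fin k), w₁.length = n → w₂.length = n →
      (∀ a : Fin k, w₁.count a = r a) → (∀ a : Fin k, w₂.count a = r a) →
      IsSuffixArray w₁ π → IsSuffixArray w₂ π → w₁ = w₂) := by
  constructor
  · constructor
    · rintro ⟨w, hw, hcount, hsa⟩
      exact SA9forward r hr π w hw hcount hsa
    · intro hdes
      exact SA9backward r hr π hdes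
  · intro w₁ w₂ h1 h2 hc1 hc2 hsa1 hsa2
    refine List.ext_getElem (h1.trans h2.symm) fun p hp1 hp2 => ?_
    have hp : p < n := by rw [← h1]; exact hp1
    have e1 := SA9heads r hr π w₁ h1 hc1 hsa1 (π.symm ⟨p, hp⟩)
    have e2 := SA9heads r hr π w₂ h2 hc2 hsa2 (π.symm ⟨p, hp⟩)
    simp only [Equiv.apply_symm_apply] at e1 e2
    exact e1.trans e2.symm
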